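/- Let G be a finite simple d-regular graph with d ≥ 8 that contains no quadrangle (no cycle of length 4). Then G is completely hyperenergetic: E_G(v) ≥ 2 for every vertex v of G. -/

import Mathlib

open Matrix Finset

noncomputable def psdSqrt {n : ℕ} {B : Matrix (Fin n) (Fin n) ℝ} (hB : B.PosSemidef) :
    Matrix (Fin n) (Fin n) ℝ :=
  hB.1.eigenvectorUnitary.1 * diagonal ((√·) ∘ hB.1.eigenvalues) *
    (star hB.1.eigenvectorUnitary : Matrix (Fin n) (Fin n) ℝ)

lemma psdSqrt_mul_self {n : ℕ} {B : Matrix (Fin n) (Fin n) ℝ} (hB : B.PosSemidef) :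
    psdSqrt hB * psdSqrt hB = B := by
  conv_rhs => rw [hB.1.spectral_theorem]
  rw [Unitary.conjStarAlgAut_apply]
  unfold psdSqrt
  have hU : (star hB.1.eigenvectorUnitary : Matrix (Fin n) (Fin n) ℝ) *
      hB.1.eigenvectorUnitary.1 = 1 := Unitary.coe_star_mul_self _
  calc _ = hB.1.eigenvectorUnitary.1 * diagonal ((√·) ∘ hB.1.eigenvalues) *
      ((star hB.1.eigenvectorUnitary : Matrix (Fin n) (Fin n) ℝ) * hB.1.eigenvectorUnitary.1) *
      diagonal ((√·) ∘ hB.1.eigenvalues) *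
      (star hB.1.eigenvectorUnitary : Matrix (Fin n) (Fin n) ℝ) := by simp only [Matrix.mul_assoc]
    _ = _ := by
      rw [hU, Matrix.mul_one, Matrix.mul_assoc _ (diagonal _) (diagonal _), diagonal_mul_diagonal]
      congr 3
      ext i
      simp [Real.mul_self_sqrt (hB.eigenvalues_nonneg i)]

lemma psdSqrt_posSemidef {n : ℕ} {B : Matrix (Fin n) (Fin n) ℝ} (hB : B.PosSemidef) :
    (psdSqrt hB).PosSemidef := by
  have hD : (diagonal ((√·) ∘ hB.1.eigenvalues)).PosSemidef :=
    posSemidef_diagonal_iff.mpr (fun i => Real.sqrt_nonneg _)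
  have := hD.mul_mul_conjTranspose_same hB.1.eigenvectorUnitary.1
  unfold psdSqrt
  simpa [star_eq_conjTranspose] using this

lemma psd_cs {n : ℕ} (B : Matrix (Fin n) (Fin n) ℝ) (hB : B.PosSemidef)
    (x y : Fin n → ℝ) :
    (x ⬝ᵥ B *ᵥ y) ^ 2 ≤ (x ⬝ᵥ B *ᵥ x) * (y ⬝ᵥ B *ᵥ y) := by
  set R := psdSqrt hB with hRdef
  have hRR : R * R = B := psdSqrt_mul_self hB
  have hRsym : Rᵀ = R := by
    have := (psdSqrt_posSemidef hB).1
    rwa [IsHermitian, conjTranspose_eq_transpose_of_trivial] at this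
  have key : ∀ z w : Fin n → ℝ, z ⬝ᵥ B *ᵥ w = (R *ᵥ z) ⬝ᵥ (R *ᵥ w) := by
    intro z w
    rw [← hRR, ← mulVec_mulVec, dotProduct_mulVec, ← mulVec_transpose, hRsym]
  rw [key x y, key x x, key y y]
  have := Finset.sum_mul_sq_le_sq_mul_sq Finset.univ (R *ᵥ x) (R *ᵥ y)
  simpa [dotProduct, pow_two] using this

-- entry inequality 1: ((B²) v v)² ≤ B v v * ((B³) v v)
lemma entry_cs1 {n : ℕ} (B : Matrix (Fin n) (Fin n) ℝ) (hB : B.PosSemidef) (v : Fin n) :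
    ((B * B) v v) ^ 2 ≤ B v v * ((B * B * B) v v) := by
  have hsym : Bᵀ = B := by
    have := hB.1; rwa [IsHermitian, conjTranspose_eq_transpose_of_trivial] at this
  set e : Fin n → ℝ := Pi.single v 1 with he
  have h1 : ∀ M : Matrix (Fin n) (Fin n) ℝ, e ⬝ᵥ M *ᵥ e = M v v := by
    intro M; simp [he, mulVec_single]
  have h := psd_cs B hB e (B *ᵥ e)
  have hl : e ⬝ᵥ B *ᵥ (B *ᵥ e) = (B * B) v v := by
    rw [mulVec_mulVec]; exact h1 _
  have hsym' : ∀ i j, B i j = B j i := fun i j => by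
    conv_lhs => rw [← hsym]
    exact Matrix.transpose_apply B i j
  have hv : (B *ᵥ e) = fun i => B i v := by
    ext i; simp [he, mulVec_single]
  have hv2 : ((B * B) *ᵥ e) = fun i => (B * B) i v := by
    ext i; simp [he, mulVec_single]
  have hr : (B *ᵥ e) ⬝ᵥ B *ᵥ (B *ᵥ e) = (B * B * B) v v := by
    rw [mulVec_mulVec, hv, hv2, Matrix.mul_assoc, Matrix.mul_apply, dotProduct]
    exact Finset.sum_congr rfl fun j _ => by rw [hsym' j v]
  rw [hl, hr, h1] at h
  exact h

-- entry inequality 2: ((B³) v v)² ≤ (B²) v v * ((B²*B²) v v), needs only symmetry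
lemma entry_cs2 {n : ℕ} (B : Matrix (Fin n) (Fin n) ℝ) (hsym : Bᵀ = B) (v : Fin n) :
    ((B * B * B) v v) ^ 2 ≤ ((B * B) v v) * ((B * B * (B * B)) v v) := by
  have hsym' : ∀ i j, B i j = B j i := fun i j => by
    conv_lhs => rw [← hsym]
    exact Matrix.transpose_apply B i j
  have hexp : (B * B * B) v v = ∑ j, B v j * (B * B) j v := by
    rw [Matrix.mul_assoc, Matrix.mul_apply]
  rw [hexp]
  have h := Finset.sum_mul_sq_le_sq_mul_sq Finset.univ (fun j => B v j) (fun j => (B * B) j v)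
  refine h.trans (le_of_eq ?_)
  congr 1
  · rw [Matrix.mul_apply]
    exact Finset.sum_congr rfl fun j _ => by rw [pow_two]; rw [hsym' v j]
  · rw [Matrix.mul_apply]
    refine Finset.sum_congr rfl fun j _ => ?_
    have h2 : (B * B) v j = (B * B) j v := by
      have ht : (B * B)ᵀ = B * B := by rw [transpose_mul, hsym]
      conv_lhs => rw [← ht]
      exact Matrix.transpose_apply _ v j
    rw [pow_two, h2]

section graphbounds
variable {n : ℕ} (G : SimpleGraph (Fin n)) [DecidableRel G.Adj]

lemma offdiag_nonneg (v j : Fin n) : 0 ≤ (G.adjMatrix ℝ * G.adjMatrix ℝ) v j := by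
  rw [SimpleGraph.adjMatrix_mul_apply]
  exact Finset.sum_nonneg fun u _ => by
    simp only [SimpleGraph.adjMatrix_apply]; positivity

lemma offdiag_le_one
    (hquad : ∀ a b c e : Fin n,
      G.Adj a b → G.Adj b c → G.Adj c e → G.Adj e a → a = c ∨ b = e)
    (v j : Fin n) (hvj : v ≠ j) :
    (G.adjMatrix ℝ * G.adjMatrix ℝ) v j ≤ 1 := by
  rw [SimpleGraph.adjMatrix_mul_apply]
  have : ∑ u ∈ G.neighborFinset v, (G.adjMatrix ℝ) u j
      = ((G.neighborFinset v).filter (fun u => G.Adj u j)).card := by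
    rw [Finset.card_filter]
    push_cast
    exact Finset.sum_congr rfl fun u _ => by simp [SimpleGraph.adjMatrix_apply]
  rw [this]
  have hcard : ((G.neighborFinset v).filter (fun u => G.Adj u j)).card ≤ 1 := by
    apply Finset.card_le_one.mpr
    intro b hb e heb
    simp only [Finset.mem_filter, SimpleGraph.mem_neighborFinset] at hb heb
    rcases hquad v b j e hb.1 hb.2 heb.2.symm heb.1.symm with h | h
    · exact absurd h hvj
    · exact h
  exact_mod_cast hcard

lemma rowsum_sq {d : ℕ} (hreg : G.IsRegularOfDegree d) (v : Fin n) :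
    ∑ j, (G.adjMatrix ℝ * G.adjMatrix ℝ) v j = (d : ℝ) ^ 2 := by
  have hrow : ∀ u : Fin n, ∑ j, (G.adjMatrix ℝ) u j = (d : ℝ) := by
    intro u
    simp only [SimpleGraph.adjMatrix_apply]
    rw [Finset.sum_boole]
    rw [← SimpleGraph.neighborFinset_eq_filter]
    rw [← SimpleGraph.degree, hreg u]
  calc ∑ j, (G.adjMatrix ℝ * G.adjMatrix ℝ) v j
      = ∑ j, ∑ u ∈ G.neighborFinset v, (G.adjMatrix ℝ) u j :=
        Finset.sum_congr rfl fun j _ => G.adjMatrix_mul_apply (G.adjMatrix ℝ) v j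
    _ = ∑ u ∈ G.neighborFinset v, ∑ j, (G.adjMatrix ℝ) u j := Finset.sum_comm
    _ = ∑ u ∈ G.neighborFinset v, (d : ℝ) := Finset.sum_congr rfl fun u _ => hrow u
    _ = (d : ℝ) ^ 2 := by
        rw [Finset.sum_const, ← SimpleGraph.degree, hreg v]; ring

lemma diag_sq {d : ℕ} (hreg : G.IsRegularOfDegree d) (v : Fin n) :
    (G.adjMatrix ℝ * G.adjMatrix ℝ) v v = (d : ℝ) := by
  rw [SimpleGraph.adjMatrix_mul_self_apply_self, hreg v]

lemma fourth_bound {d : ℕ} (hreg : G.IsRegularOfDegree d)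
    (hquad : ∀ a b c e : Fin n,
      G.Adj a b → G.Adj b c → G.Adj c e → G.Adj e a → a = c ∨ b = e)
    (v : Fin n) :
    (G.adjMatrix ℝ * G.adjMatrix ℝ * (G.adjMatrix ℝ * G.adjMatrix ℝ)) v v
      ≤ 2 * (d : ℝ) ^ 2 - d := by
  set A2 := G.adjMatrix ℝ * G.adjMatrix ℝ with hA2
  have hsymA2 : ∀ i j, A2 i j = A2 j i := by
    intro i j
    have ht : A2ᵀ = A2 := by
      rw [hA2, transpose_mul, SimpleGraph.transpose_adjMatrix]
    conv_lhs => rw [← ht]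
    exact Matrix.transpose_apply _ i j
  have hexp : (A2 * A2) v v = ∑ j, A2 v j ^ 2 := by
    rw [Matrix.mul_apply]
    exact Finset.sum_congr rfl fun j _ => by rw [pow_two, hsymA2 j v]
  rw [hexp]
  rw [← Finset.sum_erase_add _ _ (Finset.mem_univ v)]
  have hdiag := diag_sq G hreg v
  have h1 : ∑ j ∈ Finset.univ.erase v, A2 v j ^ 2 ≤ ∑ j ∈ Finset.univ.erase v, A2 v j := by
    apply Finset.sum_le_sum
    intro j hj
    have hvj : v ≠ j := fun h => (Finset.mem_erase.mp hj).1 h.symm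
    have h0 := offdiag_nonneg G v j
    have hle := offdiag_le_one G hquad v j hvj
    nlinarith
  have h2 : ∑ j ∈ Finset.univ.erase v, A2 v j = (d : ℝ) ^ 2 - d := by
    have := rowsum_sq G hreg v
    rw [← Finset.sum_erase_add _ _ (Finset.mem_univ v)] at this
    rw [hdiag] at this; linarith
  rw [← hA2] at hdiag
  rw [hdiag]
  nlinarith [h1, h2]

end graphbounds

/-- The energy of the vertex `i` of a finite simple graph `G`:
the `(i,i)` entry of `|A| = (A Aᴴ)^{1/2}`, where `A` is the adjacency matrix. -/
noncomputable def vertexEnergy {n : ℕ} (G : SimpleGraph (Fin n)) [DecidableRel G.Adj]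
    (i : Fin n) : ℝ :=
  ((Matrix.posSemidef_self_mul_conjTranspose (G.adjMatrix ℝ)).1.eigenvectorUnitary.1 *
    diagonal ((√·) ∘ (Matrix.posSemidef_self_mul_conjTranspose (G.adjMatrix ℝ)).1.eigenvalues) *
    (star (Matrix.posSemidef_self_mul_conjTranspose (G.adjMatrix ℝ)).1.eigenvectorUnitary :
      Matrix (Fin n) (Fin n) ℝ)) i i

theorem stmt_11 {n : ℕ} (G : SimpleGraph (Fin n)) [DecidableRel G.Adj]
    (d : ℕ) (hreg : G.IsRegularOfDegree d) (hd : 8 ≤ d)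
    (hquad : ∀ a b c e : Fin n,
      G.Adj a b → G.Adj b c → G.Adj c e → G.Adj e a → a = c ∨ b = e) :
    ∀ v : Fin n, 2 ≤ vertexEnergy G v := by
  intro v
  set A := G.adjMatrix ℝ with hAdef
  set hA := Matrix.posSemidef_self_mul_conjTranspose A with hhA
  set B := psdSqrt hA with hBdef
  have hE : vertexEnergy G v = B v v := rfl
  have hAsym : Aᴴ = A := by
    rw [conjTranspose_eq_transpose_of_trivial, hAdef, SimpleGraph.transpose_adjMatrix]
  have hBpsd : B.PosSemidef := psdSqrt_posSemidef hA
  have hBsym : Bᵀ = B := by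
    have := hBpsd.1
    rwa [IsHermitian, conjTranspose_eq_transpose_of_trivial] at this
  have hBB : B * B = A * A := by
    calc B * B = A * Aᴴ := psdSqrt_mul_self hA
      _ = A * A := by rw [hAsym]
  set a1 := B v v with ha1def
  set a3 := (B * B * B) v v with ha3def
  set a4 := (B * B * (B * B)) v v with ha4def
  set dr := (d : ℝ) with hdrdef
  have hdr : (8 : ℝ) ≤ dr := by rw [hdrdef]; exact_mod_cast hd
  have hdrpos : (0 : ℝ) < dr := by linarith
  have ha2 : (B * B) v v = dr := by rw [hBB]; exact diag_sq G hreg v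
  have hcs1 : dr ^ 2 ≤ a1 * a3 := by
    have := entry_cs1 B hBpsd v
    rwa [ha2] at this
  have hcs2 : a3 ^ 2 ≤ dr * a4 := by
    have := entry_cs2 B hBsym v
    rwa [ha2] at this
  have ha4 : a4 ≤ 2 * dr ^ 2 - dr := by
    rw [ha4def, hBB]
    exact fourth_bound G hreg hquad v
  have ha1 : 0 ≤ a1 := by
    exact hBpsd.diag_nonneg
  have ha3 : 0 < a3 := by
    by_contra h
    push_neg at h
    have : a1 * a3 ≤ 0 := mul_nonpos_of_nonneg_of_nonpos ha1 h
    nlinarith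
  have step1 : dr ^ 4 ≤ (a1 * a3) ^ 2 := by nlinarith [hcs1, sq_nonneg dr]
  have step3 : a1 ^ 2 * a3 ^ 2 ≤ a1 ^ 2 * (dr * a4) :=
    mul_le_mul_of_nonneg_left hcs2 (sq_nonneg a1)
  have step4 : dr * a4 ≤ dr * (2 * dr ^ 2 - dr) :=
    mul_le_mul_of_nonneg_left ha4 hdrpos.le
  have main : dr ^ 4 ≤ a1 ^ 2 * (dr * (2 * dr ^ 2 - dr)) := by nlinarith [step1, step3, step4, sq_nonneg a1]
  have key : 4 ≤ a1 ^ 2 := by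
    nlinarith [main, hdr, hdrpos, sq_nonneg a1, mul_nonneg (mul_nonneg hdrpos.le hdrpos.le) (mul_nonneg (sub_nonneg.mpr hdr) hdrpos.le)]
  rw [hE]
  nlinarith [key, ha1]
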